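/- Under the same setting, the Gaussian rectangle probability ∫_R f(y) dy is bounded below by (λmin^{k/2}/√(det Σ)) · ∏_{l=1}^k Pr{Z_l ∈ [(a_l-μ_l)/√λmin, (b_l-μ_l)/√λmin]}, where λmin is the smallest eigenvalue of Σ and Z_l are independent standard Gaussians. -/

import Mathlib

open Matrix MeasureTheory Real


lemma quad_bound {k : ℕ} (S : Matrix (Fin k) (Fin k) ℝ) (hS : S.PosDef) (lam : ℝ)
    (hlam : 0 < lam) (hle : ∀ i, lam ≤ hS.1.eigenvalues i) (x : Fin k → ℝ) :
    x ⬝ᵥ (S⁻¹ *ᵥ x) ≤ lam⁻¹ * (x ⬝ᵥ x) := by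
  set U : Matrix (Fin k) (Fin k) ℝ := (hS.1.eigenvectorUnitary : Matrix (Fin k) (Fin k) ℝ) with hU
  set eig := hS.1.eigenvalues
  have hUU : star U * U = 1 := mem_unitaryGroup_iff'.mp hS.1.eigenvectorUnitary.2
  have hUU' : U * star U = 1 := mem_unitaryGroup_iff.mp hS.1.eigenvectorUnitary.2
  have hspec : S = U * diagonal eig * star U := by
    have := hS.1.spectral_theorem
    simpa using this
  have heigpos : ∀ i, 0 < eig i := fun i => hS.eigenvalues_pos i
  have hinv : S⁻¹ = U * diagonal (fun i => (eig i)⁻¹) * star U := by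
    apply inv_eq_right_inv
    rw [hspec]
    calc U * diagonal eig * star U * (U * diagonal (fun i => (eig i)⁻¹) * star U)
        = U * diagonal eig * (star U * U) * diagonal (fun i => (eig i)⁻¹) * star U := by
          ring_nf
          noncomm_ring
      _ = 1 := by
          rw [hUU, mul_one, mul_assoc U, diagonal_mul_diagonal]
          have : (fun i => eig i * (eig i)⁻¹) = fun _ => (1:ℝ) := by
            funext i; exact mul_inv_cancel₀ (heigpos i).ne'
          rw [this, diagonal_one, mul_one, hUU']
  have hM : (lam⁻¹ • (1 : Matrix (Fin k) (Fin k) ℝ) - S⁻¹).PosSemidef := by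
    have hdiag : diagonal (fun _ : Fin k => lam⁻¹) = lam⁻¹ • (1 : Matrix (Fin k) (Fin k) ℝ) := by
      ext i j
      by_cases h : i = j <;> simp [Matrix.diagonal_apply, h]
    have hsm : lam⁻¹ • (1 : Matrix (Fin k) (Fin k) ℝ)
        = U * diagonal (fun _ : Fin k => lam⁻¹) * star U := by
      rw [hdiag, mul_smul_comm, smul_mul_assoc, mul_one, hUU']
    have h1 : lam⁻¹ • (1 : Matrix (Fin k) (Fin k) ℝ) - S⁻¹
        = U * diagonal (fun i => lam⁻¹ - (eig i)⁻¹) * star U := by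
      rw [hinv, hsm, ← sub_mul, ← mul_sub]
      congr 2
      ext i j
      by_cases h : i = j <;> simp [Matrix.diagonal_apply, h]
    rw [h1]
    have := (Matrix.PosSemidef.diagonal (d := fun i => lam⁻¹ - (eig i)⁻¹)
      (by intro i; simp; exact inv_anti₀ hlam (hle i))).mul_mul_conjTranspose_same U
    simpa [Matrix.star_eq_conjTranspose] using this
  have := hM.dotProduct_mulVec_nonneg x
  have hsx : star x = x := by simp
  rw [hsx, Matrix.sub_mulVec, Matrix.smul_mulVec, Matrix.one_mulVec,
    dotProduct_sub, dotProduct_smul, smul_eq_mul] at this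
  linarith [this]

lemma setIntegral_pi_prod {k : ℕ} (t : Fin k → Set ℝ) (ht : ∀ l, MeasurableSet (t l))
    (F : Fin k → ℝ → ℝ) :
    ∫ y in Set.univ.pi t, ∏ l, F l (y l) = ∏ l, ∫ x in t l, F l x := by
  rw [← integral_indicator (MeasurableSet.univ_pi ht)]
  have h : (Set.univ.pi t).indicator (fun y => ∏ l, F l (y l))
      = fun y => ∏ l, (t l).indicator (F l) (y l) := by
    funext y
    by_cases hy : y ∈ Set.univ.pi t
    · rw [Set.indicator_of_mem hy]
      exact Finset.prod_congr rfl fun l _ =>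
        (Set.indicator_of_mem (hy l trivial) _).symm
    · rw [Set.indicator_of_notMem hy]
      simp only [Set.mem_pi, Set.mem_univ, forall_true_left, not_forall] at hy
      obtain ⟨l, hl⟩ := hy
      exact (Finset.prod_eq_zero (Finset.mem_univ l) (Set.indicator_of_notMem hl _)).symm
  rw [h, MeasureTheory.integral_fintype_prod_volume_eq_prod (f := fun l => (t l).indicator (F l))]
  exact Finset.prod_congr rfl fun l _ => integral_indicator (ht l)

lemma one_dim (lam : ℝ) (hlam : 0 < lam) (m A B : ℝ) :
    ∫ x in Set.Icc A B, Real.exp (-((x - m)^2) / (2 * lam))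
      = Real.sqrt lam * ∫ z in Set.Icc ((A - m)/Real.sqrt lam) ((B - m)/Real.sqrt lam),
          Real.exp (-(z^2)/2) := by
  have hs : 0 < Real.sqrt lam := Real.sqrt_pos.mpr hlam
  have key : ∀ x : ℝ, Real.exp (-((x - m)^2) / (2 * lam))
      = Real.exp (-(((x - m)/Real.sqrt lam)^2)/2) := by
    intro x
    congr 1
    have h2 : ((x - m)/Real.sqrt lam)^2 = (x - m)^2/lam := by
      rw [div_pow, Real.sq_sqrt hlam.le]
    rw [h2, neg_div, neg_div, div_div, mul_comm 2 lam]
  rcases le_or_gt A B with hAB | hAB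
  · have hAB' : (A - m)/Real.sqrt lam ≤ (B - m)/Real.sqrt lam :=
      (div_le_div_iff_of_pos_right hs).mpr (by linarith)
    rw [MeasureTheory.integral_Icc_eq_integral_Ioc,
      MeasureTheory.integral_Icc_eq_integral_Ioc,
      ← intervalIntegral.integral_of_le hAB, ← intervalIntegral.integral_of_le hAB']
    simp_rw [key]
    rw [intervalIntegral.integral_comp_sub_right (fun x => Real.exp (-(x/Real.sqrt lam)^2/2)) m,
      intervalIntegral.integral_comp_div (fun x => Real.exp (-(x^2)/2)) hs.ne']
    simp [smul_eq_mul]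
  · have hAB' : (B - m)/Real.sqrt lam < (A - m)/Real.sqrt lam :=
      (div_lt_div_iff_of_pos_right hs).mpr (by linarith)
    rw [Set.Icc_eq_empty hAB.not_ge, Set.Icc_eq_empty hAB'.not_ge]
    simp


theorem gaussian_rectangle_lower_bound {k : ℕ} [NeZero k]
    (S : Matrix (Fin k) (Fin k) ℝ) (hS : S.PosDef) (mu : Fin k → ℝ)
    (lammin : ℝ)
    (hmin : lammin = Finset.univ.inf' Finset.univ_nonempty hS.1.eigenvalues)
    (a b : Fin k → ℝ)
    (f : (Fin k → ℝ) → ℝ)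
    (hf : f = fun y => Real.exp (-(1/2) * ((y - mu) ⬝ᵥ (S⁻¹ *ᵥ (y - mu)))) /
      Real.sqrt (S.det * (2 * Real.pi) ^ k)) :
    ∫ y in Set.univ.pi (fun l => Set.Icc (a l) (b l)), f y ≥
      lammin ^ ((k : ℝ) / 2) / Real.sqrt S.det *
        ∏ l, ∫ z in Set.Icc ((a l - mu l) / Real.sqrt lammin)
          ((b l - mu l) / Real.sqrt lammin),
          Real.exp (-(z ^ 2) / 2) / Real.sqrt (2 * Real.pi) := by
  have hdet : 0 < S.det := hS.det_pos
  have hlampos : 0 < lammin := by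
    obtain ⟨i, -, hi⟩ := Finset.exists_mem_eq_inf' (Finset.univ_nonempty (α := Fin k))
      hS.1.eigenvalues
    rw [hmin, hi]
    exact hS.eigenvalues_pos i
  have hle : ∀ i, lammin ≤ hS.1.eigenvalues i := fun i =>
    hmin ▸ Finset.inf'_le _ (Finset.mem_univ i)
  have hsl : 0 < Real.sqrt lammin := Real.sqrt_pos.mpr hlampos
  have h2pi : (0:ℝ) < 2 * Real.pi := by positivity
  set C : ℝ := Real.sqrt (S.det * (2 * Real.pi) ^ k) with hC
  have hCpos : 0 < C := Real.sqrt_pos.mpr (by positivity)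
  set R : Set (Fin k → ℝ) := Set.univ.pi (fun l => Set.Icc (a l) (b l)) with hR
  have hRm : MeasurableSet R := MeasurableSet.univ_pi fun l => measurableSet_Icc
  have hRc : IsCompact R := isCompact_univ_pi fun l => isCompact_Icc
  set g : (Fin k → ℝ) → ℝ :=
    fun y => (∏ l, Real.exp (-((y l - mu l)^2) / (2 * lammin))) / C with hg
  -- pointwise bound
  have hfg : ∀ y, g y ≤ f y := by
    intro y
    rw [hf, hg]
    apply div_le_div_of_nonneg_right ?_ hCpos.le |>.trans_eq rfl
    rw [← Real.exp_sum]
    apply Real.exp_le_exp.mpr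
    have hx := quad_bound S hS lammin hlampos hle (y - mu)
    have e : -(1/2) * (lammin⁻¹ * ((y - mu) ⬝ᵥ (y - mu)))
        = ∑ l, -((y l - mu l)^2) / (2 * lammin) := by
      simp only [dotProduct, Pi.sub_apply, Finset.mul_sum]
      apply Finset.sum_congr rfl
      intro l _
      field_simp
    have h12 : -(1/2) * (lammin⁻¹ * ((y - mu) ⬝ᵥ (y - mu)))
        ≤ -(1/2) * ((y - mu) ⬝ᵥ (S⁻¹ *ᵥ (y - mu))) := by linarith
    rw [← e]
    exact h12
  -- continuity
  have hfc : Continuous f := by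
    rw [hf]
    apply Continuous.div_const
    apply Real.continuous_exp.comp
    simp only [dotProduct, mulVec]
    fun_prop
  have hgc : Continuous g := by
    rw [hg]
    apply Continuous.div_const
    fun_prop
  have hmono : ∫ y in R, g y ≤ ∫ y in R, f y :=
    setIntegral_mono_on ((hgc.continuousOn).integrableOn_compact hRc) ((hfc.continuousOn).integrableOn_compact hRc)
      hRm (fun y _ => hfg y)
  -- compute ∫_R g
  have hgcalc : ∫ y in R, g y
      = lammin ^ ((k : ℝ) / 2) / Real.sqrt S.det *
        ∏ l, ∫ z in Set.Icc ((a l - mu l) / Real.sqrt lammin)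
          ((b l - mu l) / Real.sqrt lammin),
          Real.exp (-(z ^ 2) / 2) / Real.sqrt (2 * Real.pi) := by
    have hsplit : ∫ y in R, g y
        = (∏ l, ∫ x in Set.Icc (a l) (b l), Real.exp (-((x - mu l)^2) / (2 * lammin))) / C := by
      rw [hg, integral_div, hR,
        setIntegral_pi_prod _ (fun l => measurableSet_Icc)
          (fun l x => Real.exp (-((x - mu l)^2) / (2 * lammin)))]
    rw [hsplit]
    have hone : ∀ l : Fin k, ∫ x in Set.Icc (a l) (b l), Real.exp (-((x - mu l)^2) / (2 * lammin))
        = Real.sqrt lammin * ∫ z in Set.Icc ((a l - mu l)/Real.sqrt lammin)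
            ((b l - mu l)/Real.sqrt lammin), Real.exp (-(z^2)/2) :=
      fun l => one_dim lammin hlampos (mu l) (a l) (b l)
    simp_rw [hone, integral_div]
    set P : Fin k → ℝ := fun l => ∫ z in Set.Icc ((a l - mu l)/Real.sqrt lammin)
      ((b l - mu l)/Real.sqrt lammin), Real.exp (-(z^2)/2) with hP
    rw [Finset.prod_mul_distrib, Finset.prod_const, Finset.card_univ, Fintype.card_fin]
    rw [Finset.prod_div_distrib, Finset.prod_const, Finset.card_univ, Fintype.card_fin]
    have hrpow : lammin ^ ((k : ℝ) / 2) = (Real.sqrt lammin) ^ k := by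
      rw [show ((k:ℝ)/2) = (1/2) * (k:ℝ) by ring, Real.rpow_mul hlampos.le,
        Real.rpow_natCast, Real.sqrt_eq_rpow]
    have hCsplit : C = Real.sqrt S.det * (Real.sqrt (2 * Real.pi)) ^ k := by
      rw [hC, Real.sqrt_mul hdet.le,
        show ((2*Real.pi)^k) = (Real.sqrt (2*Real.pi)^k)^2 by
          rw [← pow_mul, mul_comm k 2, pow_mul, Real.sq_sqrt h2pi.le],
        Real.sqrt_sq (by positivity)]
    rw [hrpow, hCsplit]
    have hd : Real.sqrt S.det ≠ 0 := (Real.sqrt_pos.mpr hdet).ne'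
    have h2 : Real.sqrt (2 * Real.pi) ≠ 0 := (Real.sqrt_pos.mpr h2pi).ne'
    field_simp
  rw [ge_iff_le, ← hgcalc]
  exact hmono
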